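/- Regularity for β = 0, singular part: let F : ℝ → ℝ be real analytic with F(0) = 0 and F′(0) = −c for some c > 0, and let B ∈ ℝ. Suppose φ : ℝ → ℝ is continuous, 2π-periodic, with zero mean, and satisfies F(φ(x)) = −(K∗φ)(x) + B for all x ∈ ℝ. Suppose φ has an isolated local maximum or isolated local minimum at a point x̄ (i.e., there is δ > 0 such that either φ(x) < φ(x̄) for all x with 0 < |x − x̄| < δ, or φ(x) > φ(x̄) for all such x), set φ̄ := φ(x̄), and assume φ̄ ≠ 0, F′(φ̄) = 0, and that a ≥ 2 is an integer with the n-th derivative F^{(n)}(φ̄) = 0 for all 2 ≤ n < a and F^{(a)}(φ̄) ≠ 0. Then (i) |φ(x) − φ̄|^a/(x − x̄)² tends to a!·|φ̄|/(2·|F^{(a)}(φ̄)|) as x → x̄ with x ≠ x̄, and (ii) φ is not differentiable at x̄. -/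

import Mathlib

open Real MeasureTheory Filter

/-- The 2π-periodic kernel of `D⁻²`, equal to `(1/(4π))(|x|−π)² − π/12` on `[−π,π]`. -/
noncomputable def Kper (x : ℝ) : ℝ :=
  (1 / (4 * π)) * (|x - 2 * π * ((round (x / (2 * π)) : ℤ) : ℝ)| - π) ^ 2 - π / 12

/-- Periodic convolution with the kernel `Kper`. -/
noncomputable def Kconv (φ : ℝ → ℝ) (x : ℝ) : ℝ :=
  ∫ y in (-π)..π, Kper (x - y) * φ y


lemma Kper_periodic : Function.Periodic Kper (2 * π) := by
  intro x
  have h2π : (2 * π) ≠ 0 := by positivity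
  have : (x + 2 * π) / (2 * π) = x / (2 * π) + 1 := by field_simp
  simp only [Kper, this, round_add_one, Int.cast_add, Int.cast_one]
  ring_nf

lemma Kper_eq {u : ℝ} (h : |u| ≤ π) : Kper u = (1 / (4 * π)) * (|u| - π) ^ 2 - π / 12 := by
  have hπ : (0:ℝ) < π := pi_pos
  rcases eq_or_lt_of_le h with h' | h'
  · -- |u| = π
    rcases (abs_eq hπ.le).mp h' with rfl | rfl
    · have : round (π / (2 * π)) = 1 := by
        rw [show π / (2 * π) = (1:ℝ)/2 by field_simp]
        norm_num [round_eq]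
      rw [Kper, this]
      push_cast
      rw [show π - 2 * π * 1 = -π by ring, abs_neg, abs_of_pos hπ]
    · have : round (-π / (2 * π)) = 0 := by
        rw [show -π / (2 * π) = -(1:ℝ)/2 by field_simp]
        norm_num [round_eq]
      rw [Kper, this]
      norm_num
  · have : round (u / (2 * π)) = 0 := by
      apply round_eq_zero_iff.mpr
      constructor
      · rw [le_div_iff₀ (by positivity)]
        nlinarith [(abs_lt.mp h').1]
      · rw [div_lt_iff₀ (by positivity)]
        nlinarith [(abs_lt.mp h').2]
    rw [Kper, this]
    norm_num

lemma Kper_measurable : Measurable Kper := by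
  have h1 : Measurable fun x : ℝ => ((round (x / (2 * π)) : ℤ) : ℝ) := by
    have : ∀ x : ℝ, round (x / (2 * π)) = ⌊x / (2 * π) + 1/2⌋ := fun x => round_eq _
    simp only [this]
    exact measurable_from_top.comp
      (Int.measurable_floor.comp ((measurable_id.div_const _).add_const _))
  unfold Kper
  fun_prop

lemma Kper_abs_le (x : ℝ) : |x - 2 * π * ((round (x / (2 * π)) : ℤ) : ℝ)| ≤ π := by
  have hπ : (0:ℝ) < π := pi_pos
  set r : ℝ := ((round (x / (2 * π)) : ℤ) : ℝ) with hr
  have key : x - 2 * π * r = 2 * π * (x / (2 * π) - r) := by field_simp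
  have h1 : |x / (2 * π) - r| ≤ 1/2 := by
    simpa [hr] using abs_sub_round (x / (2 * π))
  rw [key, abs_mul, abs_of_pos (by positivity : (0:ℝ) < 2 * π)]
  nlinarith

lemma Kper_bound (x : ℝ) : |Kper x| ≤ π / 4 + π / 12 := by
  have hπ : (0:ℝ) < π := pi_pos
  have h2 := Kper_abs_le x
  set A := |x - 2 * π * ((round (x / (2 * π)) : ℤ) : ℝ)| with hA
  have h3 : (0:ℝ) ≤ A := abs_nonneg _
  have h5 : (A - π)^2 ≤ π^2 := by nlinarith
  have h6 : 1/(4*π) * (A - π)^2 ≤ π/4 := by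
    rw [show π/4 = 1/(4*π)*π^2 by field_simp]
    exact mul_le_mul_of_nonneg_left h5 (by positivity)
  have h7 : (0:ℝ) ≤ 1/(4*π) * (A - π)^2 := by positivity
  rw [Kper, ← hA, abs_le]
  constructor <;> linarith

lemma Kper_intble {φ : ℝ → ℝ} (hφc : Continuous φ) (x a b : ℝ) :
    IntervalIntegrable (fun y => Kper (x - y) * φ y) volume a b := by
  have hm : Measurable fun y => Kper (x - y) * φ y :=
    (Kper_measurable.comp (measurable_const.sub measurable_id)).mul hφc.measurable
  obtain ⟨C, hC⟩ := (isCompact_uIcc (a := a) (b := b)).exists_bound_of_continuousOn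
    (hφc.abs.continuousOn)
  refine (intervalIntegrable_const (c := (π / 4 + π / 12) * C)).mono_fun
    hm.aestronglyMeasurable ?_
  refine (ae_restrict_iff' measurableSet_uIoc).mpr (ae_of_all _ fun y hy => ?_)
  have h1 : |φ y| ≤ C := by simpa using hC y (Set.uIoc_subset_uIcc hy)
  have h2 : |Kper (x - y)| ≤ π / 4 + π / 12 := Kper_bound _
  have h0 : (0:ℝ) ≤ |φ y| := abs_nonneg _
  show ‖Kper (x - y) * φ y‖ ≤ ‖(π / 4 + π / 12) * C‖
  rw [Real.norm_eq_abs, Real.norm_eq_abs, abs_mul]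
  calc |Kper (x - y)| * |φ y| ≤ (π / 4 + π / 12) * C := by
        apply mul_le_mul h2 h1 h0
        positivity
    _ ≤ |(π / 4 + π / 12) * C| := le_abs_self _

noncomputable def Pmom (φ : ℝ → ℝ) (j : ℕ) (x : ℝ) : ℝ := ∫ y in (0:ℝ)..x, y ^ j * φ y

lemma Pmom_hasDerivAt {φ : ℝ → ℝ} (hφc : Continuous φ) (j : ℕ) (x : ℝ) :
    HasDerivAt (Pmom φ j) (x ^ j * φ x) x := by
  have hc : Continuous fun y : ℝ => y ^ j * φ y := (continuous_pow j).mul hφc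
  exact intervalIntegral.integral_hasDerivAt_right (hc.intervalIntegrable _ _)
    (hc.stronglyMeasurableAtFilter _ _) hc.continuousAt

lemma integral_mom {φ : ℝ → ℝ} (hφc : Continuous φ) (j : ℕ) (a b : ℝ) :
    ∫ y in a..b, y ^ j * φ y = Pmom φ j b - Pmom φ j a := by
  have hc : Continuous fun y : ℝ => y ^ j * φ y := (continuous_pow j).mul hφc
  have h1 := intervalIntegral.integral_add_adjacent_intervals (μ := volume)
    (hc.intervalIntegrable 0 a) (hc.intervalIntegrable a b)
  unfold Pmom
  linarith

lemma poly_integral {φ : ℝ → ℝ} (hφc : Continuous φ) (c0 c1 c2 a b : ℝ) :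
    ∫ y in a..b, (c0 * φ y + c1 * (y * φ y) + c2 * (y ^ 2 * φ y)) =
      c0 * (Pmom φ 0 b - Pmom φ 0 a) + c1 * (Pmom φ 1 b - Pmom φ 1 a)
        + c2 * (Pmom φ 2 b - Pmom φ 2 a) := by
  have hc0 : Continuous fun y : ℝ => c0 * φ y := continuous_const.mul hφc
  have hc1 : Continuous fun y : ℝ => c1 * (y * φ y) :=
    continuous_const.mul (continuous_id.mul hφc)
  have hc2 : Continuous fun y : ℝ => c2 * (y ^ 2 * φ y) :=
    continuous_const.mul ((continuous_pow 2).mul hφc)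
  rw [intervalIntegral.integral_add ((hc0.intervalIntegrable a b).add (hc1.intervalIntegrable a b))
      (hc2.intervalIntegrable a b),
    intervalIntegral.integral_add (hc0.intervalIntegrable a b) (hc1.intervalIntegrable a b),
    intervalIntegral.integral_const_mul, intervalIntegral.integral_const_mul,
    intervalIntegral.integral_const_mul]
  have e0 : ∫ y in a..b, φ y = Pmom φ 0 b - Pmom φ 0 a := by
    simpa using integral_mom hφc 0 a b
  have e1 : ∫ y in a..b, y * φ y = Pmom φ 1 b - Pmom φ 1 a := by
    simpa using integral_mom hφc 1 a b
  have e2 := integral_mom hφc 2 a b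
  rw [e0, e1, e2]

lemma Kconv_shift {φ : ℝ → ℝ} (hφc : Continuous φ) (hφp : Function.Periodic φ (2 * π)) (x : ℝ) :
    Kconv φ x = ∫ y in (x - π)..(x + π), Kper (x - y) * φ y := by
  have hper : Function.Periodic (fun y => Kper (x - y) * φ y) (2 * π) := by
    intro y
    have h1 : Kper (x - (y + 2 * π)) = Kper (x - y) := by
      have h2 := Kper_periodic (x - y - 2 * π)
      rw [show x - y - 2 * π + 2 * π = x - y by ring] at h2
      rw [show x - (y + 2 * π) = x - y - 2 * π by ring, h2]
    simp only []
    rw [h1, hφp y]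
  have := hper.intervalIntegral_add_eq (x - π) (-π)
  rw [Kconv, show -π + 2 * π = π by ring] at *
  rw [← this, show x - π + 2 * π = x + π by ring]

lemma mean_shift {φ : ℝ → ℝ} (hφc : Continuous φ) (hφp : Function.Periodic φ (2 * π))
    (hφ0 : (∫ y in (-π)..π, φ y) = 0) (x : ℝ) :
    Pmom φ 0 (x + π) - Pmom φ 0 (x - π) = 0 := by
  have h1 : ∫ y in (x - π)..(x + π), φ y = 0 := by
    have := hφp.intervalIntegral_add_eq (x - π) (-π)
    rw [show x - π + 2 * π = x + π by ring, show -π + 2 * π = π by ring] at this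
    rw [this, hφ0]
  have := integral_mom hφc 0 (x - π) (x + π)
  simp only [pow_zero, one_mul] at this
  linarith

lemma Kconv_formula {φ : ℝ → ℝ} (hφc : Continuous φ) (hφp : Function.Periodic φ (2 * π))
    (x : ℝ) :
    Kconv φ x =
      ((1/(4*π))*x^2 - x/2 + π/6) * (Pmom φ 0 x - Pmom φ 0 (x - π))
        + (-(2*(1/(4*π))*x) + 1/2) * (Pmom φ 1 x - Pmom φ 1 (x - π))
        + (1/(4*π)) * (Pmom φ 2 x - Pmom φ 2 (x - π))
        + ((1/(4*π))*x^2 + x/2 + π/6) * (Pmom φ 0 (x + π) - Pmom φ 0 x)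
        + (-(2*(1/(4*π))*x) - 1/2) * (Pmom φ 1 (x + π) - Pmom φ 1 x)
        + (1/(4*π)) * (Pmom φ 2 (x + π) - Pmom φ 2 x) := by
  have hπ : (0:ℝ) < π := pi_pos
  rw [Kconv_shift hφc hφp x,
    ← intervalIntegral.integral_add_adjacent_intervals (Kper_intble hφc x (x - π) x)
      (Kper_intble hφc x x (x + π))]
  have hI1 : ∫ y in (x - π)..x, Kper (x - y) * φ y
      = ∫ y in (x - π)..x, (((1/(4*π))*x^2 - x/2 + π/6) * φ y
          + (-(2*(1/(4*π))*x) + 1/2) * (y * φ y) + (1/(4*π)) * (y ^ 2 * φ y)) := by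
    apply intervalIntegral.integral_congr
    intro y hy
    rw [Set.uIcc_of_le (by linarith : x - π ≤ x)] at hy
    have h1 : 0 ≤ x - y := by linarith [hy.2]
    have h2 : x - y ≤ π := by linarith [hy.1]
    show Kper (x - y) * φ y = _
    rw [Kper_eq (by rw [abs_of_nonneg h1]; exact h2), abs_of_nonneg h1]
    field_simp
    ring
  have hI2 : ∫ y in x..(x + π), Kper (x - y) * φ y
      = ∫ y in x..(x + π), (((1/(4*π))*x^2 + x/2 + π/6) * φ y
          + (-(2*(1/(4*π))*x) - 1/2) * (y * φ y) + (1/(4*π)) * (y ^ 2 * φ y)) := by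
    apply intervalIntegral.integral_congr
    intro y hy
    rw [Set.uIcc_of_le (by linarith : x ≤ x + π)] at hy
    have h1 : x - y ≤ 0 := by linarith [hy.1]
    have h2 : -π ≤ x - y := by linarith [hy.2]
    show Kper (x - y) * φ y = _
    rw [Kper_eq (by rw [abs_of_nonpos h1]; linarith), abs_of_nonpos h1]
    field_simp
    ring
  rw [hI1, hI2, poly_integral hφc, poly_integral hφc]
  ring

noncomputable def Kd (φ : ℝ → ℝ) (x : ℝ) : ℝ :=
  (2*(1/(4*π))*x - 1/2) * (Pmom φ 0 x - Pmom φ 0 (x - π))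
    - 2*(1/(4*π)) * (Pmom φ 1 x - Pmom φ 1 (x - π))
    + (2*(1/(4*π))*x + 1/2) * (Pmom φ 0 (x + π) - Pmom φ 0 x)
    - 2*(1/(4*π)) * (Pmom φ 1 (x + π) - Pmom φ 1 x)

lemma Pmom_shift_hasDerivAt {φ : ℝ → ℝ} (hφc : Continuous φ) (j : ℕ) (c x : ℝ) :
    HasDerivAt (fun x => Pmom φ j (x + c)) ((x + c) ^ j * φ (x + c)) x := by
  have := (Pmom_hasDerivAt hφc j (x + c)).comp x ((hasDerivAt_id x).add_const c)
  exact this.congr_deriv (mul_one _)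

lemma Kconv_hasDerivAt {φ : ℝ → ℝ} (hφc : Continuous φ) (hφp : Function.Periodic φ (2 * π))
    (x : ℝ) : HasDerivAt (Kconv φ) (Kd φ x) x := by
  have hπ : (0:ℝ) < π := pi_pos
  have hfun : Kconv φ = fun x =>
      ((1/(4*π))*x^2 - x/2 + π/6) * (Pmom φ 0 x - Pmom φ 0 (x - π))
        + (-(2*(1/(4*π))*x) + 1/2) * (Pmom φ 1 x - Pmom φ 1 (x - π))
        + (1/(4*π)) * (Pmom φ 2 x - Pmom φ 2 (x - π))
        + ((1/(4*π))*x^2 + x/2 + π/6) * (Pmom φ 0 (x + π) - Pmom φ 0 x)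
        + (-(2*(1/(4*π))*x) - 1/2) * (Pmom φ 1 (x + π) - Pmom φ 1 x)
        + (1/(4*π)) * (Pmom φ 2 (x + π) - Pmom φ 2 x) :=
    funext (Kconv_formula hφc hφp)
  rw [hfun]
  have hq : φ (x + π) = φ (x - π) := by
    have := hφp (x - π)
    rwa [show x - π + 2 * π = x + π by ring] at this
  -- building blocks
  have hUm : ∀ j : ℕ, HasDerivAt (fun x => Pmom φ j x - Pmom φ j (x - π))
      (x ^ j * φ x - (x - π) ^ j * φ (x - π)) x := fun j => by
    have h2 := Pmom_shift_hasDerivAt hφc j (-π) x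
    simp only [← sub_eq_add_neg] at h2
    exact (Pmom_hasDerivAt hφc j x).sub h2
  have hVm : ∀ j : ℕ, HasDerivAt (fun x => Pmom φ j (x + π) - Pmom φ j x)
      ((x + π) ^ j * φ (x + π) - x ^ j * φ x) x := fun j =>
    (Pmom_shift_hasDerivAt hφc j π x).sub (Pmom_hasDerivAt hφc j x)
  have hA : HasDerivAt (fun x : ℝ => (1/(4*π))*x^2 - x/2 + π/6) (2*(1/(4*π))*x - 1/2) x := by
    have := (((hasDerivAt_pow 2 x).const_mul (1/(4*π))).sub
      ((hasDerivAt_id x).div_const 2)).add_const (π/6)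
    exact this.congr_deriv (by norm_num; ring)
  have hB : HasDerivAt (fun x : ℝ => -(2*(1/(4*π))*x) + 1/2) (-(2*(1/(4*π)))) x := by
    have := (((hasDerivAt_id x).const_mul (2*(1/(4*π)))).neg).add_const (1/2)
    exact this.congr_deriv (by norm_num)
  have hC : HasDerivAt (fun x : ℝ => (1/(4*π))*x^2 + x/2 + π/6) (2*(1/(4*π))*x + 1/2) x := by
    have := (((hasDerivAt_pow 2 x).const_mul (1/(4*π))).add
      ((hasDerivAt_id x).div_const 2)).add_const (π/6)
    exact this.congr_deriv (by norm_num; ring)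
  have hD : HasDerivAt (fun x : ℝ => -(2*(1/(4*π))*x) - 1/2) (-(2*(1/(4*π)))) x := by
    have := (((hasDerivAt_id x).const_mul (2*(1/(4*π)))).neg).sub_const (1/2)
    exact this.congr_deriv (by norm_num)
  have H1 := hA.mul (hUm 0)
  have H2 := H1.add (hB.mul (hUm 1))
  have H3 := H2.add ((hUm 2).const_mul (1/(4*π)))
  have H4 := H3.add (hC.mul (hVm 0))
  have H5 := H4.add (hD.mul (hVm 1))
  have H := H5.add ((hVm 2).const_mul (1/(4*π)))
  refine H.congr_deriv ?_
  simp only [pow_zero, pow_one, one_mul]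
  rw [Kd, hq]
  field_simp
  ring

lemma Kd_hasDerivAt {φ : ℝ → ℝ} (hφc : Continuous φ) (hφp : Function.Periodic φ (2 * π))
    (hφ0 : (∫ y in (-π)..π, φ y) = 0) (x : ℝ) :
    HasDerivAt (Kd φ) (-(φ x)) x := by
  have hπ : (0:ℝ) < π := pi_pos
  have hq : φ (x + π) = φ (x - π) := by
    have := hφp (x - π)
    rwa [show x - π + 2 * π = x + π by ring] at this
  have hmean := mean_shift hφc hφp hφ0 x
  have hUm : ∀ j : ℕ, HasDerivAt (fun x => Pmom φ j x - Pmom φ j (x - π))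
      (x ^ j * φ x - (x - π) ^ j * φ (x - π)) x := fun j => by
    have h2 := Pmom_shift_hasDerivAt hφc j (-π) x
    simp only [← sub_eq_add_neg] at h2
    exact (Pmom_hasDerivAt hφc j x).sub h2
  have hVm : ∀ j : ℕ, HasDerivAt (fun x => Pmom φ j (x + π) - Pmom φ j x)
      ((x + π) ^ j * φ (x + π) - x ^ j * φ x) x := fun j =>
    (Pmom_shift_hasDerivAt hφc j π x).sub (Pmom_hasDerivAt hφc j x)
  have hE : HasDerivAt (fun x : ℝ => 2*(1/(4*π))*x - 1/2) (2*(1/(4*π))) x := by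
    have := ((hasDerivAt_id x).const_mul (2*(1/(4*π)))).sub_const (1/2)
    exact this.congr_deriv (by norm_num)
  have hE' : HasDerivAt (fun x : ℝ => 2*(1/(4*π))*x + 1/2) (2*(1/(4*π))) x := by
    have := ((hasDerivAt_id x).const_mul (2*(1/(4*π)))).add_const (1/2)
    exact this.congr_deriv (by norm_num)
  have H1 := hE.mul (hUm 0)
  have H2 := H1.sub ((hUm 1).const_mul (2*(1/(4*π))))
  have H3 := H2.add (hE'.mul (hVm 0))
  have H := H3.sub ((hVm 1).const_mul (2*(1/(4*π))))
  have hKd : Kd φ = fun x =>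
      (2*(1/(4*π))*x - 1/2) * (Pmom φ 0 x - Pmom φ 0 (x - π))
        - 2*(1/(4*π)) * (Pmom φ 1 x - Pmom φ 1 (x - π))
        + (2*(1/(4*π))*x + 1/2) * (Pmom φ 0 (x + π) - Pmom φ 0 x)
        - 2*(1/(4*π)) * (Pmom φ 1 (x + π) - Pmom φ 1 x) := rfl
  rw [hKd]
  refine H.congr_deriv ?_
  simp only [pow_zero, pow_one, one_mul]
  rw [hq]
  have hsub : Pmom φ 0 (x + π) - Pmom φ 0 x = Pmom φ 0 (x - π) - Pmom φ 0 x := by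
    linarith [hmean]
  rw [hsub]
  field_simp
  ring

lemma tendsto_sub_punctured (t0 : ℝ) :
    Tendsto (fun t => t - t0) (nhdsWithin t0 {t0}ᶜ) (nhdsWithin 0 {(0:ℝ)}ᶜ) := by
  apply tendsto_nhdsWithin_of_tendsto_nhds_of_eventually_within
  · have : Tendsto (fun t => t - t0) (nhds t0) (nhds (t0 - t0)) :=
      (continuous_id.sub continuous_const).tendsto t0
    rw [sub_self] at this
    exact this.mono_left nhdsWithin_le_nhds
  · filter_upwards [self_mem_nhdsWithin] with t ht
    simpa [sub_eq_zero] using ht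

lemma analytic_ratio (F : ℝ → ℝ) (t0 : ℝ) (hF : AnalyticAt ℝ F t0) (a : ℕ) (ha : 1 ≤ a)
    (hvan : ∀ m, 1 ≤ m → m < a → iteratedDeriv m F t0 = 0) :
    Tendsto (fun t => (F t - F t0) / (t - t0) ^ a) (nhdsWithin t0 {t0}ᶜ)
      (nhds (iteratedDeriv a F t0 / (a.factorial : ℝ))) := by
  obtain ⟨p, hp⟩ := hF
  obtain ⟨r, hpb⟩ := hp
  have hcoeff : ∀ n, (n.factorial : ℝ) * p.coeff n = iteratedDeriv n F t0 := by
    intro n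
    have h1 := hpb.factorial_smul (y := (1:ℝ)) n
    rw [iteratedDeriv_eq_iteratedFDeriv]
    rw [← h1, nsmul_eq_mul]
    congr 1
  have hps : ∀ y : ℝ, p.partialSum (a + 1) y = F t0 + p.coeff a * y ^ a := by
    intro y
    rw [FormalMultilinearSeries.partialSum, Finset.sum_range_succ]
    have hzero : ∑ k ∈ Finset.range a, (p k fun _ => y) = F t0 := by
      rw [Finset.sum_eq_single_of_mem 0 (Finset.mem_range.mpr (by omega))]
      · have h0 : p.coeff 0 = F t0 := by
          have := hcoeff 0
          simpa [iteratedDeriv_zero] using this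
        have : (p 0 fun _ => y) = p.coeff 0 := by
          rw [FormalMultilinearSeries.apply_eq_pow_smul_coeff]
          simp
        rw [this, h0]
      · intro k hk hk0
        have hck : p.coeff k = 0 := by
          have h1 := hcoeff k
          have h2 := hvan k (by omega) (Finset.mem_range.mp hk)
          have h3 : (k.factorial : ℝ) ≠ 0 := Nat.cast_ne_zero.mpr k.factorial_ne_zero
          rw [h2] at h1
          exact (mul_eq_zero.mp h1).resolve_left h3
        rw [FormalMultilinearSeries.apply_eq_pow_smul_coeff, hck, smul_zero]
    rw [hzero, FormalMultilinearSeries.apply_eq_pow_smul_coeff, smul_eq_mul]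
    ring
  have hO : (fun y : ℝ => F (t0 + y) - (F t0 + p.coeff a * y ^ a)) =O[nhds 0]
      fun y => ‖y‖ ^ (a + 1) := by
    have := (show HasFPowerSeriesAt F p t0 from ⟨r, hpb⟩).isBigO_sub_partialSum_pow (a + 1)
    simpa only [hps] using this
  obtain ⟨C, hC⟩ := hO.bound
  have h0 : Tendsto (fun y : ℝ => (F (t0 + y) - F t0 - p.coeff a * y ^ a) / y ^ a)
      (nhdsWithin 0 {(0:ℝ)}ᶜ) (nhds 0) := by
    have hg : Tendsto (fun y : ℝ => C * |y|) (nhdsWithin 0 {(0:ℝ)}ᶜ) (nhds 0) := by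
      have : Tendsto (fun y : ℝ => C * |y|) (nhds 0) (nhds (C * |0|)) :=
        (continuous_const.mul continuous_abs).tendsto 0
      simp only [abs_zero, mul_zero] at this
      exact this.mono_left nhdsWithin_le_nhds
    refine squeeze_zero_norm' ?_ hg
    · filter_upwards [nhdsWithin_le_nhds hC, self_mem_nhdsWithin] with y hy hy0
      have hy0' : y ≠ 0 := by simpa using hy0
      have hyabs : (0:ℝ) < |y| := abs_pos.mpr hy0'
      rw [norm_div, norm_pow, Real.norm_eq_abs]
      rw [div_le_iff₀ (by positivity)]
      calc ‖F (t0 + y) - F t0 - p.coeff a * y ^ a‖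
          = ‖F (t0 + y) - (F t0 + p.coeff a * y ^ a)‖ := by ring_nf
        _ ≤ C * ‖‖y‖ ^ (a + 1)‖ := hy
        _ = C * |y| * |y| ^ a := by
            rw [Real.norm_eq_abs, Real.norm_eq_abs, abs_of_nonneg (by positivity)]
            ring
  have h1 : Tendsto (fun y : ℝ => (F (t0 + y) - F t0) / y ^ a)
      (nhdsWithin 0 {(0:ℝ)}ᶜ) (nhds (p.coeff a)) := by
    have h2 := h0.add (tendsto_const_nhds (x := p.coeff a))
    rw [zero_add] at h2
    apply h2.congr'
    filter_upwards [self_mem_nhdsWithin] with y hy0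
    have hy0' : y ≠ 0 := by simpa using hy0
    field_simp
    ring
  have hval : p.coeff a = iteratedDeriv a F t0 / (a.factorial : ℝ) := by
    have h3 : (a.factorial : ℝ) ≠ 0 := Nat.cast_ne_zero.mpr a.factorial_ne_zero
    field_simp [← hcoeff a]
    rw [← hcoeff a]; ring
  rw [← hval]
  have := h1.comp (tendsto_sub_punctured t0)
  apply this.congr
  intro t
  simp [Function.comp]

lemma taylor_peano2 (f f' : ℝ → ℝ) (x0 L : ℝ)
    (hf : ∀ x, HasDerivAt f (f' x) x) (hf' : HasDerivAt f' L x0) :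
    (fun x => f x - f x0 - f' x0 * (x - x0) - L/2 * (x - x0)^2)
      =o[nhds x0] fun x => (x - x0)^2 := by
  rw [Asymptotics.isLittleO_iff]
  intro c hc
  have hlo := (hasDerivAt_iff_isLittleO.mp hf')
  rw [Asymptotics.isLittleO_iff] at hlo
  have hev := hlo hc
  rw [Metric.eventually_nhds_iff] at hev ⊢
  obtain ⟨δ, hδ, hball⟩ := hev
  refine ⟨δ, hδ, fun x hx => ?_⟩
  set g : ℝ → ℝ := fun t => f t - f x0 - f' x0 * (t - x0) - L/2 * (t - x0)^2 with hg
  set g' : ℝ → ℝ := fun t => f' t - f' x0 - L * (t - x0) with hg'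
  have hgd : ∀ t, HasDerivAt g (g' t) t := by
    intro t
    have h1 : HasDerivAt (fun t : ℝ => (t - x0)^2) (2*(t-x0)) t := by
      exact (((hasDerivAt_id t).sub_const x0).pow 2).congr_deriv (by simp)
    have h2 : HasDerivAt (fun t : ℝ => f' x0 * (t - x0)) (f' x0) t := by
      simpa using ((hasDerivAt_id t).sub_const x0).const_mul (f' x0)
    have h3 := ((hf t).sub_const (f x0)).sub h2 |>.sub (h1.const_mul (L/2))
    refine h3.congr_deriv ?_
    simp only [hg']
    ring
  have habs : ∀ t ∈ Set.uIcc x0 x, |t - x0| ≤ |x - x0| := by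
    intro t ht
    rcases le_total x0 x with h | h
    · rw [Set.uIcc_of_le h] at ht
      rw [abs_le, abs_of_nonneg (by linarith : (0:ℝ) ≤ x - x0)]
      constructor <;> linarith [ht.1, ht.2]
    · rw [Set.uIcc_of_ge h] at ht
      rw [abs_le, abs_of_nonpos (by linarith : x - x0 ≤ 0)]
      constructor <;> linarith [ht.1, ht.2]
  have hbound : ∀ t ∈ Set.uIcc x0 x, ‖g' t‖ ≤ c * |x - x0| := by
    intro t ht
    have h1 : dist t x0 < δ := by
      rw [Real.dist_eq]
      calc |t - x0| ≤ |x - x0| := habs t ht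
        _ = dist x x0 := (Real.dist_eq x x0).symm
        _ < δ := hx
    have h2 := hball h1
    simp only [smul_eq_mul] at h2
    calc ‖g' t‖ = ‖f' t - f' x0 - (t - x0) * L‖ := by rw [hg']; ring_nf
      _ ≤ c * ‖t - x0‖ := h2
      _ ≤ c * |x - x0| := by
          rw [Real.norm_eq_abs]
          exact mul_le_mul_of_nonneg_left (habs t ht) hc.le
  have hmvt := (convex_uIcc x0 x).norm_image_sub_le_of_norm_hasDerivWithin_le
    (fun t _ => (hgd t).hasDerivWithinAt) hbound (Set.left_mem_uIcc) (Set.right_mem_uIcc)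
  have hg0 : g x0 = 0 := by simp [hg]
  rw [hg0, sub_zero] at hmvt
  calc ‖g x‖ ≤ c * |x - x0| * ‖x - x0‖ := hmvt
    _ = c * ‖(x - x0)^2‖ := by
        rw [Real.norm_eq_abs, Real.norm_eq_abs, abs_pow]
        ring

/-- Regularity for `β = 0`, singular part: at an isolated local extremum `x0` with
critical value `φ(x0) = φ̄ ≠ 0`, `F′(φ̄) = 0`, and `a` the first order `≥ 2` with
`F⁽ᵃ⁾(φ̄) ≠ 0`, the solution is exactly `2/a`-Hölder at `x0` and not differentiable there. -/
theorem regularity_beta_zero_singular (F : ℝ → ℝ) (c : ℝ) (hc : 0 < c)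
    (hF : ∀ x, AnalyticAt ℝ F x) (hF0 : F 0 = 0) (hF1 : deriv F 0 = -c) (B : ℝ)
    (φ : ℝ → ℝ) (hφc : Continuous φ) (hφp : Function.Periodic φ (2 * π))
    (hφ0 : (∫ y in (-π)..π, φ y) = 0)
    (heq : ∀ x, F (φ x) = -(Kconv φ x) + B)
    (x0 : ℝ)
    (hext : ∃ δ > (0 : ℝ),
      (∀ x, 0 < |x - x0| → |x - x0| < δ → φ x < φ x0) ∨
      (∀ x, 0 < |x - x0| → |x - x0| < δ → φ x0 < φ x))
    (hne : φ x0 ≠ 0) (hcrit : deriv F (φ x0) = 0)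
    (a : ℕ) (ha : 2 ≤ a)
    (hvan : ∀ m, 2 ≤ m → m < a → iteratedDeriv m F (φ x0) = 0)
    (hnz : iteratedDeriv a F (φ x0) ≠ 0) :
    Filter.Tendsto (fun x => |φ x - φ x0| ^ a / (x - x0) ^ 2) (nhdsWithin x0 {x0}ᶜ)
        (nhds ((a.factorial : ℝ) * |φ x0| / (2 * |iteratedDeriv a F (φ x0)|))) ∧
      ¬ DifferentiableAt ℝ φ x0 := by
  obtain ⟨δ, hδ, hcase⟩ := hext
  set ψ : ℝ → ℝ := fun x => -(Kconv φ x) + B with hψ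
  set lC : ℝ := iteratedDeriv a F (φ x0) / (a.factorial : ℝ) with hlC
  have hfac : (0:ℝ) < (a.factorial : ℝ) := by positivity
  have hlam0 : lC ≠ 0 := div_ne_zero hnz (ne_of_gt hfac)
  have hψd : ∀ x, HasDerivAt ψ (-(Kd φ x)) x := fun x =>
    ((Kconv_hasDerivAt hφc hφp x).neg).add_const B
  have hψ'd : ∀ x, HasDerivAt (fun x => -(Kd φ x)) (φ x) x := fun x => by
    exact (Kd_hasDerivAt hφc hφp hφ0 x).neg.congr_deriv (neg_neg _)
  -- basic eventual facts on the punctured neighborhood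
  have hev : ∀ᶠ x in nhdsWithin x0 {x0}ᶜ, 0 < |x - x0| ∧ |x - x0| < δ := by
    have h1 : ∀ᶠ x in nhdsWithin x0 {x0}ᶜ, |x - x0| < δ := by
      apply Filter.Eventually.filter_mono nhdsWithin_le_nhds
      rw [Metric.eventually_nhds_iff]
      exact ⟨δ, hδ, fun x hx => by rwa [Real.dist_eq] at hx⟩
    filter_upwards [h1, self_mem_nhdsWithin] with x h1x h2x
    have : x ≠ x0 := h2x
    exact ⟨abs_pos.mpr (sub_ne_zero.mpr this), h1x⟩
  have hφne : ∀ᶠ x in nhdsWithin x0 {x0}ᶜ, φ x ≠ φ x0 := by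
    filter_upwards [hev] with x hx
    rcases hcase with h | h
    · exact ne_of_lt (h x hx.1 hx.2)
    · exact ne_of_gt (h x hx.1 hx.2)
  have hφt : Tendsto φ (nhdsWithin x0 {x0}ᶜ) (nhdsWithin (φ x0) {φ x0}ᶜ) := by
    apply tendsto_nhdsWithin_of_tendsto_nhds_of_eventually_within
    · exact (hφc.tendsto x0).mono_left nhdsWithin_le_nhds
    · exact hφne
  -- the quotient (ψ x - ψ x0)/(φ x - φ x0)^a tends to lC
  have hvan' : ∀ m, 1 ≤ m → m < a → iteratedDeriv m F (φ x0) = 0 := by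
    intro m h1 h2
    rcases eq_or_lt_of_le h1 with h | h
    · rw [← h]
      simpa [iteratedDeriv_one] using hcrit
    · exact hvan m h h2
  have hA := analytic_ratio F (φ x0) (hF (φ x0)) a (by omega) hvan'
  have hQ : Tendsto (fun x => (ψ x - ψ x0) / (φ x - φ x0) ^ a)
      (nhdsWithin x0 {x0}ᶜ) (nhds lC) := by
    have := hA.comp hφt
    apply this.congr
    intro x
    simp only [Function.comp]
    have e1 : ψ x = F (φ x) := (heq x).symm
    have e2 : ψ x0 = F (φ x0) := (heq x0).symm
    rw [e1, e2]
  -- v x := (φ x - φ x0)^a has constant sign near x0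
  have hvsign : (∀ᶠ x in nhdsWithin x0 {x0}ᶜ, 0 < (φ x - φ x0) ^ a) ∨
      (∀ᶠ x in nhdsWithin x0 {x0}ᶜ, (φ x - φ x0) ^ a < 0) := by
    rcases hcase with h | h
    · rcases Nat.even_or_odd a with hpar | hpar
      · left
        filter_upwards [hev] with x hx
        exact hpar.pow_pos (sub_ne_zero.mpr (ne_of_lt (h x hx.1 hx.2)))
      · right
        filter_upwards [hev] with x hx
        exact hpar.pow_neg (sub_neg.mpr (h x hx.1 hx.2))
    · left
      filter_upwards [hev] with x hx
      exact pow_pos (sub_pos.mpr (h x hx.1 hx.2)) a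
  have hTne : ∀ᶠ x in nhdsWithin x0 {x0}ᶜ, ψ x - ψ x0 ≠ 0 := by
    have h1 := hQ.eventually_ne hlam0
    have h2 : ∀ᶠ x in nhdsWithin x0 {x0}ᶜ, (φ x - φ x0) ^ a ≠ 0 := by
      filter_upwards [hφne] with x hx
      exact pow_ne_zero a (sub_ne_zero.mpr hx)
    filter_upwards [h1, h2] with x h1x h2x
    intro h0
    rw [h0, zero_div] at h1x
    exact h1x rfl
  -- Step: the first derivative of ψ at x0 vanishes
  have hs0 : -(Kd φ x0) = 0 := by
    by_contra hs
    have hslope : Tendsto (fun x => (ψ x - ψ x0) / (x - x0)) (nhdsWithin x0 {x0}ᶜ)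
        (nhds (-(Kd φ x0))) := by
      have := hasDerivAt_iff_tendsto_slope.mp (hψd x0)
      apply this.congr
      intro x
      rw [slope_def_field]
    set L0 : ℝ := -(Kd φ x0) / lC with hL0
    have hL0ne : L0 ≠ 0 := div_ne_zero hs hlam0
    have hu : Tendsto (fun x => (φ x - φ x0) ^ a / (x - x0)) (nhdsWithin x0 {x0}ᶜ)
        (nhds L0) := by
      have h1 := hslope.div hQ hlam0
      apply h1.congr'
      filter_upwards [hTne, hφne, self_mem_nhdsWithin] with x hT hφx hx
      have hx0 : x - x0 ≠ 0 := sub_ne_zero.mpr hx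
      have hv0 : (φ x - φ x0) ^ a ≠ 0 := pow_ne_zero a (sub_ne_zero.mpr hφx)
      show ((ψ x - ψ x0) / (x - x0)) / ((ψ x - ψ x0) / (φ x - φ x0) ^ a) = (φ x - φ x0) ^ a / (x - x0)
      field_simp
    have hmonoL : nhdsWithin x0 (Set.Iio x0) ≤ nhdsWithin x0 {x0}ᶜ :=
      nhdsWithin_mono x0 (fun y hy => ne_of_lt hy)
    have hmonoR : nhdsWithin x0 (Set.Ioi x0) ≤ nhdsWithin x0 {x0}ᶜ :=
      nhdsWithin_mono x0 (fun y hy => ne_of_gt hy)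
    rcases hvsign with hv | hv
    · -- v > 0 : u < 0 on the left, u > 0 on the right
      have hL1 : L0 ≤ 0 := by
        apply le_of_tendsto (hu.mono_left hmonoL)
        filter_upwards [hmonoL hv, self_mem_nhdsWithin] with x hvx hx
        have hx0 : x - x0 < 0 := sub_neg.mpr hx
        exact le_of_lt (div_neg_of_pos_of_neg hvx hx0)
      have hL2 : 0 ≤ L0 := by
        apply ge_of_tendsto (hu.mono_left hmonoR)
        filter_upwards [hmonoR hv, self_mem_nhdsWithin] with x hvx hx
        have hx0 : 0 < x - x0 := sub_pos.mpr hx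
        exact le_of_lt (div_pos hvx hx0)
      exact hL0ne (le_antisymm hL1 hL2)
    · have hL1 : 0 ≤ L0 := by
        apply ge_of_tendsto (hu.mono_left hmonoL)
        filter_upwards [hmonoL hv, self_mem_nhdsWithin] with x hvx hx
        have hx0 : x - x0 < 0 := sub_neg.mpr hx
        exact le_of_lt (div_pos_of_neg_of_neg hvx hx0)
      have hL2 : L0 ≤ 0 := by
        apply le_of_tendsto (hu.mono_left hmonoR)
        filter_upwards [hmonoR hv, self_mem_nhdsWithin] with x hvx hx
        have hx0 : 0 < x - x0 := sub_pos.mpr hx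
        exact le_of_lt (div_neg_of_neg_of_pos hvx hx0)
      exact hL0ne (le_antisymm hL2 hL1)
  -- second order expansion of ψ
  have hlo := taylor_peano2 ψ (fun x => -(Kd φ x)) x0 (φ x0) hψd (hψ'd x0)
  simp only [show (fun x => -(Kd φ x)) x0 = (0:ℝ) from hs0, zero_mul, sub_zero] at hlo
  have hT2 : Tendsto (fun x => (ψ x - ψ x0) / (x - x0) ^ 2) (nhdsWithin x0 {x0}ᶜ)
      (nhds (φ x0 / 2)) := by
    have h1 : Tendsto (fun x => (ψ x - ψ x0 - φ x0 / 2 * (x - x0) ^ 2) / (x - x0) ^ 2)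
        (nhdsWithin x0 {x0}ᶜ) (nhds 0) :=
      hlo.tendsto_div_nhds_zero.mono_left nhdsWithin_le_nhds
    have h2 := h1.add (tendsto_const_nhds (x := φ x0 / 2))
    rw [zero_add] at h2
    apply h2.congr'
    filter_upwards [self_mem_nhdsWithin] with x hx
    have hx0 : x - x0 ≠ 0 := sub_ne_zero.mpr hx
    have hx2 : (x - x0) ^ 2 ≠ 0 := pow_ne_zero 2 hx0
    field_simp
    ring
  -- main limit (part i)
  have hmain : Tendsto (fun x => |φ x - φ x0| ^ a / (x - x0) ^ 2) (nhdsWithin x0 {x0}ᶜ)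
      (nhds ((a.factorial : ℝ) * |φ x0| / (2 * |iteratedDeriv a F (φ x0)|))) := by
    have h1 : Tendsto (fun x => |(ψ x - ψ x0) / (x - x0) ^ 2|) (nhdsWithin x0 {x0}ᶜ)
        (nhds (|φ x0 / 2|)) := hT2.abs
    have h2 : Tendsto (fun x => |((ψ x - ψ x0) / (φ x - φ x0) ^ a)⁻¹|)
        (nhdsWithin x0 {x0}ᶜ) (nhds (|lC⁻¹|)) := (hQ.inv₀ hlam0).abs
    have h3 := h1.mul h2
    have heqv : ∀ᶠ x in nhdsWithin x0 {x0}ᶜ,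
        |(ψ x - ψ x0) / (x - x0) ^ 2| * |((ψ x - ψ x0) / (φ x - φ x0) ^ a)⁻¹|
          = |φ x - φ x0| ^ a / (x - x0) ^ 2 := by
      filter_upwards [hTne, hφne, self_mem_nhdsWithin] with x hT hφx hx
      have hx0 : x - x0 ≠ 0 := sub_ne_zero.mpr hx
      rw [inv_div, abs_div, abs_div, abs_pow, abs_pow]
      rw [div_mul_div_comm]
      rw [show |ψ x - ψ x0| * |φ x - φ x0| ^ a = |φ x - φ x0| ^ a * |ψ x - ψ x0| by ring]
      rw [mul_div_mul_right _ _ (abs_ne_zero.mpr hT)]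
      rw [show |x - x0| ^ 2 = (x - x0) ^ 2 by rw [← abs_pow, abs_of_nonneg (sq_nonneg _)]]
    have hconst : |φ x0 / 2| * |lC⁻¹|
        = (a.factorial : ℝ) * |φ x0| / (2 * |iteratedDeriv a F (φ x0)|) := by
      rw [abs_div, abs_inv, hlC, abs_div]
      rw [abs_of_pos hfac, abs_of_pos (by norm_num : (0:ℝ) < 2)]
      rw [inv_div]
      field_simp
    rw [← hconst]
    exact h3.congr' (by filter_upwards [heqv] with x hx using hx)
  refine ⟨hmain, ?_⟩
  -- part (ii)
  intro hdiff
  have hloc : deriv φ x0 = 0 := by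
    rcases hcase with h | h
    · apply IsLocalMax.deriv_eq_zero
      rw [IsLocalMax, IsMaxFilter, Metric.eventually_nhds_iff]
      refine ⟨δ, hδ, fun x hx => ?_⟩
      rcases eq_or_ne x x0 with rfl | hne'
      · exact le_rfl
      · exact le_of_lt (h x (abs_pos.mpr (sub_ne_zero.mpr hne')) (by rwa [Real.dist_eq] at hx))
    · apply IsLocalMin.deriv_eq_zero
      rw [IsLocalMin, IsMinFilter, Metric.eventually_nhds_iff]
      refine ⟨δ, hδ, fun x hx => ?_⟩
      rcases eq_or_ne x x0 with rfl | hne'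
      · exact le_rfl
      · exact le_of_lt (h x (abs_pos.mpr (sub_ne_zero.mpr hne')) (by rwa [Real.dist_eq] at hx))
  have hd : HasDerivAt φ 0 x0 := by
    have := hdiff.hasDerivAt
    rwa [hloc] at this
  have hslope0 : Tendsto (fun x => |φ x - φ x0| / |x - x0|) (nhdsWithin x0 {x0}ᶜ)
      (nhds 0) := by
    have h1 := hasDerivAt_iff_tendsto_slope.mp hd
    have h2 := h1.abs
    rw [abs_zero] at h2
    apply h2.congr
    intro x
    rw [slope_def_field, abs_div]
  have hzero : Tendsto (fun x => |φ x - φ x0| ^ a / (x - x0) ^ 2) (nhdsWithin x0 {x0}ᶜ)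
      (nhds 0) := by
    have hpa : Tendsto (fun x => (|φ x - φ x0| / |x - x0|) ^ a) (nhdsWithin x0 {x0}ᶜ)
        (nhds 0) := by
      have := hslope0.pow a
      rwa [zero_pow (by omega : a ≠ 0)] at this
    apply squeeze_zero' ?_ ?_ hpa
    · filter_upwards [self_mem_nhdsWithin] with x hx
      positivity
    · have hsmall : ∀ᶠ x in nhdsWithin x0 {x0}ᶜ, |x - x0| ≤ 1 := by
        have hh : ∀ᶠ x in nhds x0, |x - x0| ≤ 1 := by
          rw [Metric.eventually_nhds_iff]
          exact ⟨1, one_pos, fun x hx => by rw [Real.dist_eq] at hx; linarith⟩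
        exact hh.filter_mono nhdsWithin_le_nhds
      filter_upwards [hsmall, self_mem_nhdsWithin] with x hx1 hx
      have hx0 : x - x0 ≠ 0 := sub_ne_zero.mpr hx
      have hxa : (0:ℝ) < |x - x0| := abs_pos.mpr hx0
      rw [div_pow, div_le_div_iff₀ (by positivity) (by positivity)]
      have e1 : |x - x0| ^ a = |x - x0| ^ 2 * |x - x0| ^ (a - 2) := by
        rw [← pow_add]
        congr 1
        omega
      have e2 : (x - x0) ^ 2 = |x - x0| ^ 2 := by
        rw [← abs_pow, abs_of_nonneg (sq_nonneg _)]
      rw [e1, e2]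
      have e3 : |x - x0| ^ (a - 2) ≤ 1 := pow_le_one₀ (abs_nonneg _) hx1
      calc |φ x - φ x0| ^ a * (|x - x0| ^ 2 * |x - x0| ^ (a - 2))
          = (|φ x - φ x0| ^ a * |x - x0| ^ 2) * |x - x0| ^ (a - 2) := by ring
        _ ≤ (|φ x - φ x0| ^ a * |x - x0| ^ 2) * 1 :=
            mul_le_mul_of_nonneg_left e3 (by positivity)
        _ = |φ x - φ x0| ^ a * |x - x0| ^ 2 := by ring
  have := tendsto_nhds_unique hzero hmain
  have hpos : (0:ℝ) < (a.factorial : ℝ) * |φ x0| / (2 * |iteratedDeriv a F (φ x0)|) := by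
    have h1 : (0:ℝ) < |φ x0| := abs_pos.mpr hne
    have h2 : (0:ℝ) < |iteratedDeriv a F (φ x0)| := abs_pos.mpr hnz
    positivity
  rw [← this] at hpos
  exact lt_irrefl 0 hpos
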